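/- For any surjective quandle homomorphism f : A → B, the canonical map ⟨f, η_A⟩ : A → B ×_{π₀(B)} π₀(A), a ↦ (f(a), [a]), into the pullback of π₀(f) : π₀(A) → π₀(B) along η_B : B → π₀(B) is surjective. -/

import Mathlib

/-- A quandle in the sense of the paper: a set with two binary operations
`act` (`◁`) and `inv` (`◁⁻¹`) satisfying idempotency, right invertibility
and (right) self-distributivity. -/
class Quandle' (A : Type*) where
  act : A → A → A
  inv : A → A → A
  idem : ∀ a, act a a = a
  inv_act : ∀ a b, inv (act a b) b = a
  act_inv : ∀ a b, act (inv a b) b = a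
  distrib : ∀ a b c, act (act a b) c = act (act a c) (act b c)

open Quandle'

/-- A quandle homomorphism preserves both operations. -/
def IsQuandleHom {A B : Type*} [Quandle' A] [Quandle' B] (f : A → B) : Prop :=
  (∀ a a', f (act a a') = act (f a) (f a')) ∧
  (∀ a a', f (inv a a') = inv (f a) (f a'))

/-- The right translation `ρ_b : a ↦ a ◁ b`, as a permutation of `A`. -/
def rho {A : Type*} [Quandle' A] (b : A) : Equiv.Perm A :=
  ⟨fun a => act a b, fun a => inv a b, fun a => inv_act a b, fun a => act_inv a b⟩

/-- The group of inner automorphisms of a quandle, as a subgroup of `Equiv.Perm A`. -/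
def Inn (A : Type*) [Quandle' A] : Subgroup (Equiv.Perm A) :=
  Subgroup.closure (Set.range (rho (A := A)))

/-- The orbit relation `∼_N` associated with a subgroup `N ≤ Perm A`. -/
def orbitRel {A : Type*} [Quandle' A] (N : Subgroup (Equiv.Perm A)) (a b : A) : Prop :=
  ∃ n ∈ N, n a = b

/-- Two elements are in the same connected component when they are in the
same orbit of `Inn A`. -/
def sameComponent {A : Type*} [Quandle' A] (a b : A) : Prop :=
  orbitRel (Inn A) a b

/-- Trivial extension: a surjective quandle homomorphism such that elements with the
same image lying in the same connected component are equal (condition (T)). -/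
def IsTrivialExt {A B : Type*} [Quandle' A] [Quandle' B] (f : A → B) : Prop :=
  Function.Surjective f ∧ IsQuandleHom f ∧
    ∀ a a', f a = f a' → sameComponent a a' → a = a'

/-- Evaluation of a word `a₀ ◁^{α₁} a₁ ◁^{α₂} ⋯ ◁^{αₙ} aₙ`; `true` stands for
exponent `1` and `false` for exponent `-1`. -/
def wordEval {A : Type*} [Quandle' A] (a₀ : A) (l : List (Bool × A)) : A :=
  l.foldl (fun x p => if p.1 then act x p.2 else inv x p.2) a₀

/-- Condition (N) characterizing normal extensions. -/
def CondN {A B : Type*} [Quandle' A] [Quandle' B] (f : A → B) : Prop :=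
  ∀ (a₀ : A) (l : List (Bool × A)), wordEval a₀ l = a₀ →
    ∀ (a₀' : A) (l' : List (Bool × A)), f a₀' = f a₀ →
      List.Forall₂ (fun p q => p.1 = q.1 ∧ f p.2 = f q.2) l l' →
      wordEval a₀' l' = a₀'

/-- Normal extension (via condition (N)). -/
def IsNormalExt {A B : Type*} [Quandle' A] [Quandle' B] (f : A → B) : Prop :=
  Function.Surjective f ∧ IsQuandleHom f ∧ CondN f

/-- Quandle covering in the sense of Eisermann (= central extension). -/
def IsCovering {A B : Type*} [Quandle' A] [Quandle' B] (f : A → B) : Prop :=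
  Function.Surjective f ∧ IsQuandleHom f ∧
    ∀ a a' c, f a = f a' → act c a = act c a'

/-- A congruence on a quandle: an equivalence relation compatible with both operations. -/
def IsCongruence {A : Type*} [Quandle' A] (r : A → A → Prop) : Prop :=
  Equivalence r ∧
    ∀ a a' b b', r a b → r a' b' → r (act a a') (act b b') ∧ r (inv a a') (inv b b')

/-- Relational composition: `(a,b) ∈ relComp S R` iff `∃ c, R a c ∧ S c b`. -/
def relComp {X : Type*} (S R : X → X → Prop) (a b : X) : Prop :=
  ∃ c, R a c ∧ S c b

/-- The kernel congruence of a map. -/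
def eqRel {A B : Type*} (f : A → B) (a a' : A) : Prop := f a = f a'

/-- The image of a relation along a map. -/
def imageRel {A B : Type*} (f : A → B) (R : A → A → Prop) (b b' : B) : Prop :=
  ∃ a a', R a a' ∧ f a = b ∧ f a' = b'

instance prodQuandle {A B : Type*} [Quandle' A] [Quandle' B] : Quandle' (A × B) where
  act p q := (act p.1 q.1, act p.2 q.2)
  inv p q := (inv p.1 q.1, inv p.2 q.2)
  idem p := Prod.ext (idem p.1) (idem p.2)
  inv_act p q := Prod.ext (inv_act p.1 q.1) (inv_act p.2 q.2)
  act_inv p q := Prod.ext (act_inv p.1 q.1) (act_inv p.2 q.2)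
  distrib p q r := Prod.ext (distrib p.1 q.1 r.1) (distrib p.2 q.2 r.2)

/-- The pullback of `f : A → C` and `g : B → C` as a set. -/
def Pullback {A B C : Type*} (f : A → C) (g : B → C) : Type _ :=
  { p : A × B // f p.1 = g p.2 }

/-- The quandle structure on a pullback of two quandle homomorphisms. -/
def pullbackQuandle {A B C : Type*} [Quandle' A] [Quandle' B] [Quandle' C]
    (f : A → C) (g : B → C) (hf : IsQuandleHom f) (hg : IsQuandleHom g) :
    Quandle' (Pullback f g) where
  act p q := ⟨act p.1 q.1, by
    show f (act p.1.1 q.1.1) = g (act p.1.2 q.1.2)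
    rw [hf.1, hg.1, p.2, q.2]⟩
  inv p q := ⟨inv p.1 q.1, by
    show f (inv p.1.1 q.1.1) = g (inv p.1.2 q.1.2)
    rw [hf.2, hg.2, p.2, q.2]⟩
  idem p := Subtype.ext (idem p.1)
  inv_act p q := Subtype.ext (inv_act p.1 q.1)
  act_inv p q := Subtype.ext (act_inv p.1 q.1)
  distrib p q r := Subtype.ext (distrib p.1 q.1 r.1)

/-- The congruence generated by a relation `R`. -/
def congClosure {A : Type*} [Quandle' A] (R : A → A → Prop) (a b : A) : Prop :=
  ∀ S : A → A → Prop, IsCongruence S → (∀ x y, R x y → S x y) → S a b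

/-- The congruence generated by `R`, as a setoid. -/
def congClosureSetoid {A : Type*} [Quandle' A] (R : A → A → Prop) : Setoid A :=
  ⟨congClosure R,
    ⟨fun a S hS _ => hS.1.refl a,
     fun h S hS hR => hS.1.symm (h S hS hR),
     fun h1 h2 S hS hR => hS.1.trans (h1 S hS hR) (h2 S hS hR)⟩⟩

/-- The quotient quandle by the congruence generated by `R`. -/
def quotQuandle {A : Type*} [Quandle' A] (R : A → A → Prop) :
    Quandle' (Quotient (congClosureSetoid R)) where
  act := Quotient.map₂ act
    (fun _ _ h _ _ h' S hS hR => (hS.2 _ _ _ _ (h S hS hR) (h' S hS hR)).1)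
  inv := Quotient.map₂ inv
    (fun _ _ h _ _ h' S hS hR => (hS.2 _ _ _ _ (h S hS hR) (h' S hS hR)).2)
  idem q := Quotient.inductionOn q fun a => congrArg (Quotient.mk _) (idem a)
  inv_act q r := Quotient.inductionOn₂ q r fun a b => congrArg (Quotient.mk _) (inv_act a b)
  act_inv q r := Quotient.inductionOn₂ q r fun a b => congrArg (Quotient.mk _) (act_inv a b)
  distrib q r s := Quotient.inductionOn₃ q r s fun a b c => congrArg (Quotient.mk _) (distrib a b c)

theorem stmt15 {A B : Type*} [Quandle' A] [Quandle' B] (f : A → B)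
    (hf : Function.Surjective f) (hhom : IsQuandleHom f) :
    ∀ (b : B) (a₀ : A), sameComponent b (f a₀) → ∃ a, f a = b ∧ sameComponent a a₀ := by
  intro b a₀ hbc
  obtain ⟨n, hn, hnb⟩ := hbc
  set P : B → Prop := fun y => ∃ a, f a = y ∧ sameComponent a a₀ with hP
  have key : ∀ m ∈ Inn B, (∀ y, P y → P (m y)) ∧ (∀ y, P y → P (m⁻¹ y)) := by
    intro m hm
    refine Subgroup.closure_induction ?_ ?_ ?_ ?_ hm
    · rintro x ⟨c, rfl⟩
      obtain ⟨c', rfl⟩ := hf c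
      constructor
      · rintro y ⟨a, rfl, a', ha', haa'⟩
        refine ⟨act a c', ?_, ?_⟩
        · show f (act a c') = rho (f c') (f a); rw [hhom.1]; rfl
        · exact ⟨a' * (rho c')⁻¹, mul_mem ha' (inv_mem (Subgroup.subset_closure ⟨c', rfl⟩)),
            by
              have h1 : (rho c')⁻¹ (act a c') = a := Quandle'.inv_act a c'
              simp [Equiv.Perm.mul_apply, h1, haa']⟩
      · rintro y ⟨a, rfl, a', ha', haa'⟩
        refine ⟨inv a c', ?_, ?_⟩
        · show f (inv a c') = (rho (f c'))⁻¹ (f a); rw [hhom.2]; rfl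
        · exact ⟨a' * rho c', mul_mem ha' (Subgroup.subset_closure ⟨c', rfl⟩),
            by
              have h1 : rho c' (Quandle'.inv a c') = a := Quandle'.act_inv a c'
              simp [Equiv.Perm.mul_apply, h1, haa']⟩
    · exact ⟨fun y hy => hy, fun y hy => by simpa using hy⟩
    · intro x z _ _ hx hz
      refine ⟨fun y hy => hx.1 _ (hz.1 y hy), fun y hy => ?_⟩
      simpa [mul_inv_rev, Equiv.Perm.mul_apply] using hz.2 _ (hx.2 y hy)
    · intro x _ hx
      exact ⟨hx.2, by simpa using hx.1⟩
  have hPfa : P (f a₀) := ⟨a₀, rfl, 1, one_mem _, rfl⟩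
  have := (key n hn).2 (f a₀) hPfa
  rwa [← hnb, Equiv.Perm.inv_def, Equiv.symm_apply_apply] at this
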